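/- Let $f(\mathbf{x}) = \frac{1}{4}|\mathbf{x}|^2$ on $\mathbb{R}^n$. For every $C^1$ function $u$ on $\mathbb{R}^n$ with $\|u\|_{L^2_f} + \|\nabla u\|_{L^2_f} < \infty$, one has $\|(r+1)u\|_{L^2_f} \le C(\|u\|_{L^2_f} + \|\nabla u\|_{L^2_f})$ for a constant $C$ depending only on $n$, where $r(\mathbf{x}) = |\mathbf{x}|$. -/

import Mathlib

open MeasureTheory

namespace Stmt0Aux

open Real

lemma slice_key (K : ℝ) (v v' : ℝ → ℝ)
    (hv : ∀ t, HasDerivAt v (v' t) t) (hv' : Continuous v') :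
    (∫⁻ t : ℝ, ENNReal.ofReal ((v t)^2 * t^2 * Real.exp (-(K + t^2)/4))) ≤
    ∫⁻ t : ℝ, ENNReal.ofReal ((4 * (v t)^2 + 16 * (v' t)^2) * Real.exp (-(K + t^2)/4)) := by
  have hvc : Continuous v := by
    rw [continuous_iff_continuousAt]; exact fun t => (hv t).continuousAt
  set E : ℝ → ℝ := fun t => Real.exp (-(K + t^2)/4) with hE
  have hEc : Continuous E := Real.continuous_exp.comp ((continuous_const.add ((continuous_id.pow 2))).neg.div_const 4)
  have hEpos : ∀ t, 0 < E t := fun t => Real.exp_pos _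
  -- derivative of E
  have hEd : ∀ t, HasDerivAt E (-(t/2) * E t) t := by
    intro t
    have h1 : HasDerivAt (fun t : ℝ => -(K + t^2)/4) (-(t/2)) t := by
      have : HasDerivAt (fun t : ℝ => t^2) (2*t) t := by
        simpa using hasDerivAt_pow 2 t
      have := ((this.const_add K).fun_neg).div_const 4
      exact this.congr_deriv (by ring)
    simpa [hE, mul_comm] using (h1.exp)
  -- derivative of g
  set g : ℝ → ℝ := fun t => (v t)^2 * t * E t with hg
  set g' : ℝ → ℝ := fun t =>
    (2 * v t * v' t * t + (v t)^2 - (v t)^2 * t^2 / 2) * E t with hg'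
  have hgd : ∀ t, HasDerivAt g (g' t) t := by
    intro t
    have h1 : HasDerivAt (fun t => (v t)^2) (2 * v t * v' t) t := by
      simpa [mul_comm, mul_assoc] using (hv t).fun_pow 2
    have h2 : HasDerivAt (fun t => (v t)^2 * t) (2 * v t * v' t * t + (v t)^2) t := by
      simpa using h1.fun_mul (hasDerivAt_id t)
    have h3 := h2.fun_mul (hEd t)
    exact h3.congr_deriv (by simp only [hg']; ring)
  have hg'c : Continuous g' := by
    apply Continuous.mul _ hEc
    exact ((((continuous_const.mul hvc).mul hv').mul continuous_id).add (hvc.pow 2)).sub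
      (((hvc.pow 2).mul (continuous_id.pow 2)).div_const 2)
  -- interval inequality
  have key : ∀ R : ℝ, 0 ≤ R →
      ∫ t in (-R)..R, (v t)^2 * t^2 * E t ≤
      ∫ t in (-R)..R, (4 * (v t)^2 + 16 * (v' t)^2) * E t := by
    intro R hR
    have hRR : (-R) ≤ R := by linarith
    have hInt : ∀ (f : ℝ → ℝ), Continuous f → IntervalIntegrable f volume (-R) R :=
      fun f hf => hf.intervalIntegrable _ _
    have ftc : ∫ t in (-R)..R, g' t = g R - g (-R) :=
      intervalIntegral.integral_eq_sub_of_hasDerivAt (fun t _ => hgd t) (hInt g' hg'c)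
    have hI1c : Continuous (fun t => (v t)^2 * t^2 * E t) :=
      (((hvc.pow 2).mul (continuous_id.pow 2))).mul hEc
    have hI2c : Continuous (fun t => (2 * v t * v' t * t + (v t)^2) * E t) :=
      ((((continuous_const.mul hvc).mul hv').mul continuous_id).add (hvc.pow 2)).mul hEc
    have hI5c : Continuous (fun t => (4 * (v t)^2 + 16 * (v' t)^2) * E t) :=
      ((continuous_const.mul (hvc.pow 2)).add (continuous_const.mul (hv'.pow 2))).mul hEc
    have hsplit : ∫ t in (-R)..R, g' t =
        (∫ t in (-R)..R, (2 * v t * v' t * t + (v t)^2) * E t)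
        - (∫ t in (-R)..R, (v t)^2 * t^2 * E t) / 2 := by
      rw [← intervalIntegral.integral_div, ← intervalIntegral.integral_sub (hInt _ hI2c)
        ((hInt _ hI1c).div_const 2)]
      apply intervalIntegral.integral_congr
      intro t _
      simp only [hg']; ring
    have hbd : g (-R) ≤ 0 ∧ 0 ≤ g R := by
      constructor
      · have : (v (-R))^2 * (-R) ≤ 0 := mul_nonpos_of_nonneg_of_nonpos (sq_nonneg _) (by linarith)
        exact mul_nonpos_of_nonpos_of_nonneg this (hEpos _).le
      · positivity
    have hI3c : Continuous (fun t => ((v t)^2 * t^2 / 4 + 4 * (v' t)^2 + (v t)^2) * E t) :=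
      (((((hvc.pow 2).mul (continuous_id.pow 2)).div_const 4).add
        (continuous_const.mul (hv'.pow 2))).add (hvc.pow 2)).mul hEc
    have hI4c : Continuous (fun t => (4 * (v' t)^2 + (v t)^2) * E t) :=
      ((continuous_const.mul (hv'.pow 2)).add (hvc.pow 2)).mul hEc
    have hI2le : ∫ t in (-R)..R, (2 * v t * v' t * t + (v t)^2) * E t ≤
        ∫ t in (-R)..R, ((v t)^2 * t^2 / 4 + 4 * (v' t)^2 + (v t)^2) * E t := by
      apply intervalIntegral.integral_mono_on hRR (hInt _ hI2c) (hInt _ hI3c)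
      intro t _
      apply mul_le_mul_of_nonneg_right _ (hEpos t).le
      nlinarith [sq_nonneg (v t * t / 2 - 2 * v' t)]
    have hI3 : ∫ t in (-R)..R, ((v t)^2 * t^2 / 4 + 4 * (v' t)^2 + (v t)^2) * E t =
        (∫ t in (-R)..R, (v t)^2 * t^2 * E t) / 4
        + ∫ t in (-R)..R, (4 * (v' t)^2 + (v t)^2) * E t := by
      rw [← intervalIntegral.integral_div, ← intervalIntegral.integral_add
        ((hInt _ hI1c).div_const 4) (hInt _ hI4c)]
      apply intervalIntegral.integral_congr
      intro t _; ring
    have hI5 : ∫ t in (-R)..R, (4 * (v t)^2 + 16 * (v' t)^2) * E t =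
        4 * ∫ t in (-R)..R, (4 * (v' t)^2 + (v t)^2) * E t := by
      rw [← intervalIntegral.integral_const_mul]
      apply intervalIntegral.integral_congr
      intro t _; ring
    rw [hI5]
    have := ftc ▸ hsplit
    linarith [hbd.1, hbd.2, hI2le, hI3, this.symm ▸ ftc]
  -- pass to lintegrals
  set P : ℝ → ℝ := fun t => (v t)^2 * t^2 * E t with hP
  set Q : ℝ → ℝ := fun t => (4 * (v t)^2 + 16 * (v' t)^2) * E t with hQ
  have hPc : Continuous P := (((hvc.pow 2).mul (continuous_id.pow 2))).mul hEc
  have hQc : Continuous Q :=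
    ((continuous_const.mul (hvc.pow 2)).add (continuous_const.mul (hv'.pow 2))).mul hEc
  have hPnn : ∀ t, 0 ≤ P t := fun t => by positivity
  have hQnn : ∀ t, 0 ≤ Q t := fun t => by positivity
  have step : ∀ N : ℕ, (∫⁻ t in Set.Ioc (-(N:ℝ)) (N:ℝ), ENNReal.ofReal (P t)) ≤
      ∫⁻ t : ℝ, ENNReal.ofReal (Q t) := by
    intro N
    have hle : (-(N:ℝ)) ≤ (N:ℝ) := neg_le_self (Nat.cast_nonneg N)
    have hPi : IntegrableOn P (Set.Ioc (-(N:ℝ)) (N:ℝ)) := by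
      apply hPc.integrableOn_Ioc
    have hQi : IntegrableOn Q (Set.Ioc (-(N:ℝ)) (N:ℝ)) := by
      apply hQc.integrableOn_Ioc
    calc (∫⁻ t in Set.Ioc (-(N:ℝ)) (N:ℝ), ENNReal.ofReal (P t))
        = ENNReal.ofReal (∫ t in Set.Ioc (-(N:ℝ)) (N:ℝ), P t) :=
          (ofReal_integral_eq_lintegral_ofReal hPi
            (Filter.Eventually.of_forall fun t => hPnn t)).symm
      _ ≤ ENNReal.ofReal (∫ t in Set.Ioc (-(N:ℝ)) (N:ℝ), Q t) := by
          apply ENNReal.ofReal_le_ofReal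
          rw [← intervalIntegral.integral_of_le hle, ← intervalIntegral.integral_of_le hle]
          exact key (N:ℝ) (Nat.cast_nonneg N)
      _ = ∫⁻ t in Set.Ioc (-(N:ℝ)) (N:ℝ), ENNReal.ofReal (Q t) :=
          ofReal_integral_eq_lintegral_ofReal hQi
            (Filter.Eventually.of_forall fun t => hQnn t)
      _ ≤ ∫⁻ t : ℝ, ENNReal.ofReal (Q t) := setLIntegral_le_lintegral _ _
  -- monotone convergence
  set F : ℕ → ℝ → ENNReal := fun N => (Set.Ioc (-(N:ℝ)) (N:ℝ)).indicator
    (fun t => ENNReal.ofReal (P t)) with hF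
  have hFmeas : ∀ N, Measurable (F N) :=
    fun N => (ENNReal.measurable_ofReal.comp hPc.measurable).indicator measurableSet_Ioc
  have hFmono : Monotone F := by
    intro N M hNM
    apply Set.indicator_le_indicator_of_subset
    · exact Set.Ioc_subset_Ioc (by simp [Nat.cast_le.2 hNM]) (Nat.cast_le.2 hNM)
    · intro t; exact zero_le'
  have hFsup : ∀ t, (⨆ N, F N t) = ENNReal.ofReal (P t) := by
    intro t
    apply le_antisymm
    · exact iSup_le fun N => Set.indicator_le_self' (fun _ _ => zero_le') t
    · have hN : t ∈ Set.Ioc (-((⌊|t|⌋₊ + 1 : ℕ):ℝ)) ((⌊|t|⌋₊ + 1 : ℕ):ℝ) := by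
        have := Nat.lt_floor_add_one |t|
        constructor
        · push_cast; cases abs_cases t <;> linarith
        · push_cast; cases abs_cases t <;> linarith
      have : F (⌊|t|⌋₊ + 1) t = ENNReal.ofReal (P t) := Set.indicator_of_mem hN _
      exact this ▸ le_iSup (fun N => F N t) (⌊|t|⌋₊ + 1)
  calc (∫⁻ t : ℝ, ENNReal.ofReal (P t)) = ∫⁻ t : ℝ, ⨆ N, F N t := by
        apply lintegral_congr; intro t; exact (hFsup t).symm
    _ = ⨆ N, ∫⁻ t : ℝ, F N t := lintegral_iSup hFmeas hFmono
    _ ≤ ∫⁻ t : ℝ, ENNReal.ofReal (Q t) := by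
        apply iSup_le
        intro N
        rw [hF, lintegral_indicator measurableSet_Ioc]
        exact step N


noncomputable def emb (m : ℕ) : (Fin (m+1) → ℝ) → EuclideanSpace ℝ (Fin (m+1)) :=
  ⇑(MeasurableEquiv.toLp 2 (Fin (m+1) → ℝ))

lemma emb_apply (m : ℕ) (w : Fin (m+1) → ℝ) (j : Fin (m+1)) : emb m w j = w j := rfl

noncomputable def sdir (m : ℕ) (i : Fin (m+1)) : EuclideanSpace ℝ (Fin (m+1)) :=
  EuclideanSpace.single i 1

noncomputable def sbase (m : ℕ) (i : Fin (m+1)) (y : Fin m → ℝ) :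
    EuclideanSpace ℝ (Fin (m+1)) := emb m (i.insertNth 0 y)

lemma key1 (m : ℕ) (i : Fin (m+1)) (y : Fin m → ℝ) (t : ℝ) :
    emb m (i.insertNth t y) = sbase m i y + t • sdir m i := by
  ext j
  have : (sbase m i y + t • sdir m i) j = sbase m i y j + t * sdir m i j := rfl
  rw [this]
  rw [emb_apply, sbase, emb_apply, sdir]
  obtain h | h := eq_or_ne j i
  · rw [h]
    simp [Fin.insertNth_apply_same, EuclideanSpace.single_apply]
  · obtain ⟨k, hk⟩ := Fin.exists_succAbove_eq h
    rw [← hk]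
    simp [Fin.insertNth_apply_succAbove, EuclideanSpace.single_apply,
      (Fin.succAbove_ne i k)]

lemma sbase_i (m : ℕ) (i : Fin (m+1)) (y : Fin m → ℝ) : sbase m i y i = 0 := by
  rw [sbase, emb_apply]
  simp

lemma app_i (m : ℕ) (i : Fin (m+1)) (y : Fin m → ℝ) (t : ℝ) :
    (sbase m i y + t • sdir m i) i = t := by
  have : (sbase m i y + t • sdir m i) i = sbase m i y i + t * sdir m i i := rfl
  rw [this, sbase_i, sdir]
  simp [EuclideanSpace.single_apply]

lemma norm_sq_eq (m : ℕ) (i : Fin (m+1)) (y : Fin m → ℝ) (t : ℝ) :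
    ‖sbase m i y + t • sdir m i‖^2 = ‖sbase m i y‖^2 + t^2 := by
  rw [norm_add_sq_real]
  have h1 : inner ℝ (sbase m i y) (t • sdir m i) = t * inner ℝ (sbase m i y) (sdir m i) :=
    real_inner_smul_right _ _ _
  have h2 : (inner ℝ (sbase m i y) (sdir m i) : ℝ) = 0 := by
    rw [sdir, EuclideanSpace.inner_single_right]
    simp [sbase_i]
  have h3 : ‖t • sdir m i‖^2 = t^2 := by
    rw [norm_smul, sdir, EuclideanSpace.norm_single]
    simp [mul_pow, sq_abs]
  rw [h1, h2, h3]; ring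

lemma transfer (m : ℕ) (i : Fin (m+1)) (F : EuclideanSpace ℝ (Fin (m+1)) → ENNReal)
    (hF : Measurable F) :
    ∫⁻ x, F x = ∫⁻ y : Fin m → ℝ, ∫⁻ t : ℝ, F (emb m (i.insertNth t y)) := by
  have hιm : Measurable (emb m) := (MeasurableEquiv.toLp 2 (Fin (m+1) → ℝ)).measurable
  rw [MeasurePreserving.lintegral_map_equiv F _
    ((EuclideanSpace.volume_preserving_symm_measurableEquiv_toLp (Fin (m+1))).symm
      (MeasurableEquiv.toLp 2 (Fin (m+1) → ℝ)).symm)]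
  have h2 := MeasurePreserving.lintegral_map_equiv (fun a => F (emb m a)) _
    ((measurePreserving_piFinSuccAbove (fun _ : Fin (m+1) => (volume : Measure ℝ)) i).symm
      (MeasurableEquiv.piFinSuccAbove (fun _ => ℝ) i))
  have h2' : (∫⁻ a : Fin (m+1) → ℝ, F (emb m a) ∂(Measure.pi fun _ => volume)) =
      ∫⁻ a : ℝ × (Fin m → ℝ),
        F (emb m ((MeasurableEquiv.piFinSuccAbove (fun _ => ℝ) i).symm a))
        ∂((volume : Measure ℝ).prod (Measure.pi fun _ => volume)) := h2
  rw [← volume_pi] at h2'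
  have hemb : ⇑(MeasurableEquiv.toLp 2 (Fin (m+1) → ℝ)).symm.symm = emb m := rfl
  have hmeas : Measurable (fun a : ℝ × (Fin m → ℝ) =>
      F (emb m ((MeasurableEquiv.piFinSuccAbove (fun _ : Fin (m+1) => ℝ) i).symm a))) :=
    (hF.comp hιm).comp (MeasurableEquiv.measurable _)
  rw [hemb, h2', lintegral_prod_symm _ hmeas.aemeasurable]
  rw [← volume_pi]
  simp only [MeasurableEquiv.piFinSuccAbove_symm_apply, Fin.insertNthEquiv_apply,
    Fin.insertNthEquiv, Equiv.coe_fn_mk]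

lemma coord_bound {n : ℕ} (u : EuclideanSpace ℝ (Fin n) → ℝ) (hu : ContDiff ℝ 1 u) (i : Fin n) :
    (∫⁻ x : EuclideanSpace ℝ (Fin n),
      ENNReal.ofReal ((u x)^2 * (x i)^2 * Real.exp (-(‖x‖^2)/4))) ≤
    ∫⁻ x : EuclideanSpace ℝ (Fin n),
      ENNReal.ofReal ((4 * (u x)^2 + 16 * ‖fderiv ℝ u x‖^2) * Real.exp (-(‖x‖^2)/4)) := by
  obtain ⟨m, rfl⟩ : ∃ m, n = m + 1 := ⟨n - 1, (Nat.succ_pred_eq_of_pos i.pos).symm⟩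
  have huc : Continuous u := hu.continuous
  have hudc : Continuous (fderiv ℝ u) := hu.continuous_fderiv one_ne_zero
  have hF1m : Measurable (fun x : EuclideanSpace ℝ (Fin (m+1)) =>
      ENNReal.ofReal ((u x)^2 * (x i)^2 * Real.exp (-(‖x‖^2)/4))) := by
    apply ENNReal.measurable_ofReal.comp
    apply Continuous.measurable
    exact Continuous.mul (Continuous.mul (huc.pow 2)
        ((EuclideanSpace.proj (𝕜 := ℝ) i).continuous.pow 2))
      (Real.continuous_exp.comp ((continuous_norm.pow 2).neg.div_const 4))
  have hF2m : Measurable (fun x : EuclideanSpace ℝ (Fin (m+1)) =>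
      ENNReal.ofReal ((4 * (u x)^2 + 16 * ‖fderiv ℝ u x‖^2) * Real.exp (-(‖x‖^2)/4))) := by
    apply ENNReal.measurable_ofReal.comp
    apply Continuous.measurable
    exact Continuous.mul
      ((continuous_const.mul (huc.pow 2)).add (continuous_const.mul (hudc.norm.pow 2)))
      (Real.continuous_exp.comp ((continuous_norm.pow 2).neg.div_const 4))
  rw [transfer m i _ hF1m, transfer m i _ hF2m]
  apply lintegral_mono
  intro y
  -- slice setup
  set v : ℝ → ℝ := fun t => u (sbase m i y + t • sdir m i) with hv
  set v' : ℝ → ℝ := fun t => (fderiv ℝ u (sbase m i y + t • sdir m i)) (sdir m i) with hv'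
  have haff : ∀ t : ℝ, HasDerivAt (fun s : ℝ => sbase m i y + s • sdir m i) (sdir m i) t := by
    intro t
    simpa using ((hasDerivAt_id t).smul_const (sdir m i)).const_add (sbase m i y)
  have hvd : ∀ t, HasDerivAt v (v' t) t := by
    intro t
    exact ((hu.differentiable one_ne_zero _).hasFDerivAt.comp_hasDerivAt t (haff t))
  have hv'c : Continuous v' := by
    have hc1 : Continuous (fun s : ℝ => sbase m i y + s • sdir m i) :=
      continuous_const.add (continuous_id.smul continuous_const)
    exact (hudc.comp hc1).clm_apply continuous_const
  have hK := slice_key (‖sbase m i y‖^2) v v' hvd hv'c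
  -- rewrite both sides into slice form
  calc (∫⁻ t : ℝ, ENNReal.ofReal ((u (emb m (i.insertNth t y)))^2 *
          ((emb m (i.insertNth t y)) i)^2 * Real.exp (-(‖emb m (i.insertNth t y)‖^2)/4)))
      = ∫⁻ t : ℝ, ENNReal.ofReal ((v t)^2 * t^2 *
          Real.exp (-(‖sbase m i y‖^2 + t^2)/4)) := by
        apply lintegral_congr
        intro t
        rw [key1, app_i, norm_sq_eq]
    _ ≤ ∫⁻ t : ℝ, ENNReal.ofReal ((4 * (v t)^2 + 16 * (v' t)^2) *
          Real.exp (-(‖sbase m i y‖^2 + t^2)/4)) := hK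
    _ ≤ ∫⁻ t : ℝ, ENNReal.ofReal ((4 * (u (emb m (i.insertNth t y)))^2 +
          16 * ‖fderiv ℝ u (emb m (i.insertNth t y))‖^2) *
          Real.exp (-(‖emb m (i.insertNth t y)‖^2)/4)) := by
        apply lintegral_mono
        intro t
        apply ENNReal.ofReal_le_ofReal
        rw [key1, norm_sq_eq]
        apply mul_le_mul_of_nonneg_right _ (Real.exp_pos _).le
        have hop : |v' t| ≤ ‖fderiv ℝ u (sbase m i y + t • sdir m i)‖ := by
          have h1 := (fderiv ℝ u (sbase m i y + t • sdir m i)).le_opNorm (sdir m i)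
          have h2 : ‖sdir m i‖ = 1 := by
            rw [sdir, EuclideanSpace.norm_single]; simp
          rw [h2, mul_one] at h1
          simpa using h1
        nlinarith [hop, sq_abs (v' t), abs_nonneg (v' t)]


end Stmt0Aux

open Stmt0Aux in
/-- Gaussian-weighted Poincaré inequality: with `f(x) = |x|²/4`,
`‖(r+1)u‖_{L²_f} ≤ C(n) (‖u‖_{L²_f} + ‖∇u‖_{L²_f})` for every `C¹` function `u` with
finite weighted norms. -/
theorem stmt_0 (n : ℕ) :
    ∃ C : ℝ, 0 < C ∧
      ∀ u : EuclideanSpace ℝ (Fin n) → ℝ, ContDiff ℝ 1 u →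
        Integrable (fun x : EuclideanSpace ℝ (Fin n) =>
          (u x) ^ 2 * Real.exp (-(‖x‖ ^ 2) / 4)) →
        Integrable (fun x : EuclideanSpace ℝ (Fin n) =>
          ‖fderiv ℝ u x‖ ^ 2 * Real.exp (-(‖x‖ ^ 2) / 4)) →
        (∫⁻ x : EuclideanSpace ℝ (Fin n),
            ENNReal.ofReal ((‖x‖ + 1) ^ 2 * (u x) ^ 2 * Real.exp (-(‖x‖ ^ 2) / 4))) ≤
          ENNReal.ofReal ((C *
            (Real.sqrt (∫ x : EuclideanSpace ℝ (Fin n),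
                (u x) ^ 2 * Real.exp (-(‖x‖ ^ 2) / 4)) +
             Real.sqrt (∫ x : EuclideanSpace ℝ (Fin n),
                ‖fderiv ℝ u x‖ ^ 2 * Real.exp (-(‖x‖ ^ 2) / 4)))) ^ 2) := by
  refine ⟨32 * n + 2, by positivity, ?_⟩
  intro u hu hInt1 hInt2
  have hwc : Continuous (fun x : EuclideanSpace ℝ (Fin n) => Real.exp (-(‖x‖^2)/4)) :=
    Real.continuous_exp.comp ((continuous_norm.pow 2).neg.div_const 4)
  have huc : Continuous u := hu.continuous
  have hudc : Continuous (fun x : EuclideanSpace ℝ (Fin n) => fderiv ℝ u x) :=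
    hu.continuous_fderiv one_ne_zero
  set A := ∫ x : EuclideanSpace ℝ (Fin n), (u x)^2 * Real.exp (-(‖x‖^2)/4) with hA
  set B := ∫ x : EuclideanSpace ℝ (Fin n), ‖fderiv ℝ u x‖^2 * Real.exp (-(‖x‖^2)/4) with hB
  have hA0 : 0 ≤ A := integral_nonneg (fun x => by positivity)
  have hB0 : 0 ≤ B := integral_nonneg (fun x => by positivity)
  -- measurability facts
  have hm1 : Measurable (fun x : EuclideanSpace ℝ (Fin n) =>
      ENNReal.ofReal ((u x)^2 * Real.exp (-(‖x‖^2)/4))) :=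
    ENNReal.measurable_ofReal.comp ((huc.pow 2).mul hwc).measurable
  have hmi : ∀ i : Fin n, Measurable (fun x : EuclideanSpace ℝ (Fin n) =>
      ENNReal.ofReal ((u x)^2 * (x i)^2 * Real.exp (-(‖x‖^2)/4))) := by
    intro i
    exact ENNReal.measurable_ofReal.comp
      (((huc.pow 2).mul ((EuclideanSpace.proj (𝕜 := ℝ) i).continuous.pow 2)).mul hwc).measurable
  have hmS : Measurable (fun x : EuclideanSpace ℝ (Fin n) =>
      ENNReal.ofReal (2 * ((u x)^2 * ‖x‖^2 * Real.exp (-(‖x‖^2)/4)))) :=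
    ENNReal.measurable_ofReal.comp
      (continuous_const.mul (((huc.pow 2).mul (continuous_norm.pow 2)).mul hwc)).measurable
  -- basic lintegral identifications
  have hAl : (∫⁻ x : EuclideanSpace ℝ (Fin n),
      ENNReal.ofReal ((u x)^2 * Real.exp (-(‖x‖^2)/4))) = ENNReal.ofReal A :=
    (ofReal_integral_eq_lintegral_ofReal hInt1
      (Filter.Eventually.of_forall fun x => by positivity)).symm
  have hRHSl : (∫⁻ x : EuclideanSpace ℝ (Fin n), ENNReal.ofReal
      ((4*(u x)^2 + 16*‖fderiv ℝ u x‖^2) * Real.exp (-(‖x‖^2)/4))) =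
      ENNReal.ofReal (4*A + 16*B) := by
    have heq : (fun x : EuclideanSpace ℝ (Fin n) =>
        (4*(u x)^2 + 16*‖fderiv ℝ u x‖^2) * Real.exp (-(‖x‖^2)/4)) =
        fun x => 4 * ((u x)^2 * Real.exp (-(‖x‖^2)/4))
          + 16 * (‖fderiv ℝ u x‖^2 * Real.exp (-(‖x‖^2)/4)) := by
      funext x; ring
    have hint : Integrable (fun x : EuclideanSpace ℝ (Fin n) =>
        (4*(u x)^2 + 16*‖fderiv ℝ u x‖^2) * Real.exp (-(‖x‖^2)/4)) := by
      rw [heq]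
      exact (hInt1.const_mul 4).add (hInt2.const_mul 16)
    rw [← ofReal_integral_eq_lintegral_ofReal hint
      (Filter.Eventually.of_forall fun x => by positivity)]
    congr 1
    rw [heq, integral_add (hInt1.const_mul 4) (hInt2.const_mul 16),
      integral_const_mul, integral_const_mul]
  -- the main summed bound
  have hsum : (∫⁻ x : EuclideanSpace ℝ (Fin n),
      ENNReal.ofReal ((u x)^2 * ‖x‖^2 * Real.exp (-(‖x‖^2)/4))) ≤
      (n : ENNReal) * ENNReal.ofReal (4*A + 16*B) := by
    have hnormx : ∀ x : EuclideanSpace ℝ (Fin n),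
        (u x)^2 * ‖x‖^2 * Real.exp (-(‖x‖^2)/4) =
        ∑ i : Fin n, (u x)^2 * (x i)^2 * Real.exp (-(‖x‖^2)/4) := by
      intro x
      have : ‖x‖^2 = ∑ i : Fin n, (x i)^2 := by
        rw [EuclideanSpace.norm_eq, Real.sq_sqrt (by positivity)]
        congr 1; funext i; rw [Real.norm_eq_abs, sq_abs]
      rw [this, Finset.mul_sum, Finset.sum_mul]
    calc (∫⁻ x : EuclideanSpace ℝ (Fin n),
        ENNReal.ofReal ((u x)^2 * ‖x‖^2 * Real.exp (-(‖x‖^2)/4)))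
        = ∫⁻ x : EuclideanSpace ℝ (Fin n),
            ∑ i : Fin n, ENNReal.ofReal ((u x)^2 * (x i)^2 * Real.exp (-(‖x‖^2)/4)) := by
          apply lintegral_congr
          intro x
          rw [hnormx x, ENNReal.ofReal_sum_of_nonneg (fun i _ => by positivity)]
      _ = ∑ i : Fin n, ∫⁻ x : EuclideanSpace ℝ (Fin n),
            ENNReal.ofReal ((u x)^2 * (x i)^2 * Real.exp (-(‖x‖^2)/4)) :=
          lintegral_finset_sum _ (fun i _ => hmi i)
      _ ≤ ∑ _i : Fin n, ENNReal.ofReal (4*A + 16*B) := by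
          apply Finset.sum_le_sum
          intro i _
          exact (coord_bound u hu i).trans (le_of_eq hRHSl)
      _ = (n : ENNReal) * ENNReal.ofReal (4*A + 16*B) := by
          rw [Finset.sum_const, Finset.card_univ, Fintype.card_fin, nsmul_eq_mul]
  -- final chain
  have hptwise : ∀ x : EuclideanSpace ℝ (Fin n),
      ENNReal.ofReal ((‖x‖ + 1)^2 * (u x)^2 * Real.exp (-(‖x‖^2)/4)) ≤
      ENNReal.ofReal (2 * ((u x)^2 * ‖x‖^2 * Real.exp (-(‖x‖^2)/4))) +
      ENNReal.ofReal (2 * ((u x)^2 * Real.exp (-(‖x‖^2)/4))) := by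
    intro x
    rw [← ENNReal.ofReal_add (by positivity) (by positivity)]
    apply ENNReal.ofReal_le_ofReal
    have h1 : (‖x‖ + 1)^2 ≤ 2*‖x‖^2 + 2 := by nlinarith [sq_nonneg (‖x‖ - 1)]
    have h2 : (0:ℝ) ≤ (u x)^2 * Real.exp (-(‖x‖^2)/4) := by positivity
    calc (‖x‖ + 1)^2 * (u x)^2 * Real.exp (-(‖x‖^2)/4)
        = (‖x‖ + 1)^2 * ((u x)^2 * Real.exp (-(‖x‖^2)/4)) := by ring
      _ ≤ (2*‖x‖^2 + 2) * ((u x)^2 * Real.exp (-(‖x‖^2)/4)) :=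
          mul_le_mul_of_nonneg_right h1 h2
      _ = 2 * ((u x)^2 * ‖x‖^2 * Real.exp (-(‖x‖^2)/4))
          + 2 * ((u x)^2 * Real.exp (-(‖x‖^2)/4)) := by ring
  have hofReal2 : ∀ r : ℝ, ENNReal.ofReal (2 * r) = ENNReal.ofReal 2 * ENNReal.ofReal r :=
    fun r => ENNReal.ofReal_mul (by norm_num)
  calc (∫⁻ x : EuclideanSpace ℝ (Fin n),
      ENNReal.ofReal ((‖x‖ + 1) ^ 2 * (u x) ^ 2 * Real.exp (-(‖x‖ ^ 2) / 4)))
      ≤ ∫⁻ x : EuclideanSpace ℝ (Fin n),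
          (ENNReal.ofReal (2 * ((u x)^2 * ‖x‖^2 * Real.exp (-(‖x‖^2)/4))) +
           ENNReal.ofReal (2 * ((u x)^2 * Real.exp (-(‖x‖^2)/4)))) :=
        lintegral_mono fun x => hptwise x
    _ = (∫⁻ x : EuclideanSpace ℝ (Fin n),
          ENNReal.ofReal (2 * ((u x)^2 * ‖x‖^2 * Real.exp (-(‖x‖^2)/4)))) +
        ∫⁻ x : EuclideanSpace ℝ (Fin n),
          ENNReal.ofReal (2 * ((u x)^2 * Real.exp (-(‖x‖^2)/4))) :=
        lintegral_add_left hmS _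
    _ = ENNReal.ofReal 2 * (∫⁻ x : EuclideanSpace ℝ (Fin n),
          ENNReal.ofReal ((u x)^2 * ‖x‖^2 * Real.exp (-(‖x‖^2)/4))) +
        ENNReal.ofReal 2 * ∫⁻ x : EuclideanSpace ℝ (Fin n),
          ENNReal.ofReal ((u x)^2 * Real.exp (-(‖x‖^2)/4)) := by
        have hmT : Measurable (fun x : EuclideanSpace ℝ (Fin n) =>
            ENNReal.ofReal ((u x)^2 * ‖x‖^2 * Real.exp (-(‖x‖^2)/4))) :=
          ENNReal.measurable_ofReal.comp
            (((huc.pow 2).mul (continuous_norm.pow 2)).mul hwc).measurable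
        simp_rw [hofReal2]
        rw [lintegral_const_mul _ hmT, lintegral_const_mul _ hm1]
    _ ≤ ENNReal.ofReal 2 * ((n : ENNReal) * ENNReal.ofReal (4*A + 16*B)) +
        ENNReal.ofReal 2 * ENNReal.ofReal A := by
        rw [hAl]
        exact add_le_add (by gcongr) le_rfl
    _ = ENNReal.ofReal (2 * ((n:ℝ) * (4*A + 16*B)) + 2 * A) := by
        rw [← ENNReal.ofReal_natCast n, ← ENNReal.ofReal_mul (by positivity),
          ← ENNReal.ofReal_mul (by norm_num), ← ENNReal.ofReal_mul (by norm_num),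
          ← ENNReal.ofReal_add (by positivity) (by positivity)]
    _ ≤ ENNReal.ofReal (((32 * (n:ℝ) + 2) * (Real.sqrt A + Real.sqrt B)) ^ 2) := by
        apply ENNReal.ofReal_le_ofReal
        have hsa := Real.sq_sqrt hA0
        have hsb := Real.sq_sqrt hB0
        have hna : (0:ℝ) ≤ (n:ℝ) := Nat.cast_nonneg n
        nlinarith [Real.sqrt_nonneg A, Real.sqrt_nonneg B, hsa, hsb, hna,
          mul_nonneg hna hA0, mul_nonneg hna hB0,
          mul_nonneg (mul_nonneg hna hna) (mul_nonneg (Real.sqrt_nonneg A) (Real.sqrt_nonneg B)),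
          mul_nonneg (Real.sqrt_nonneg A) (Real.sqrt_nonneg B),
          mul_nonneg hna (mul_nonneg (Real.sqrt_nonneg A) (Real.sqrt_nonneg B))]
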